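/- Let A ∈ ℝ^{m×n} and i ∈ {1,…,m}. The system 'A x ≤ 0 with (A x)_i < 0' has no solution x ∈ ℝⁿ if and only if there exists y ∈ ℝ^m with y ≥ 0, Aᵀ y = 0, and y_i = 1 (equivalently, y_i > 0). -/

import Mathlib

open Finset
open scoped RealInnerProductSpace

section ConeClosed

variable {m : ℕ} {E : Type*} [NormedAddCommGroup E] [InnerProductSpace ℝ E]

/-- Extension of sums lemma -/
lemma sum_extend_cone (v : Fin m → E) (s : Finset (Fin m)) (d : Fin m → ℝ)
    (hd : ∀ j ∉ s, d j = 0) :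
    ∑ j : s, d j • v j = ∑ j, d j • v j := by
  rw [Finset.sum_coe_sort s (fun j => d j • v j)]
  exact Finset.sum_subset s.subset_univ (fun j _ hj => by rw [hd j hj, zero_smul])

/-- Carathéodory for cones: any conic combination can be supported on a
linearly independent subset. -/
lemma cone_caratheodory_aux (v : Fin m → E) :
    ∀ k : ℕ, ∀ c : Fin m → ℝ, (∀ j, 0 ≤ c j) →
      (univ.filter fun j => c j ≠ 0).card ≤ k →
      ∃ s : Finset (Fin m), LinearIndependent ℝ (fun j : s => v j) ∧
        ∃ d : Fin m → ℝ, (∀ j, 0 ≤ d j) ∧ (∀ j ∉ s, d j = 0) ∧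
          ∑ j, d j • v j = ∑ j, c j • v j := by
  intro k
  induction k with
  | zero =>
    intro c hc hcard
    have hs : (univ.filter fun j => c j ≠ 0) = ∅ := Finset.card_eq_zero.mp (Nat.le_zero.mp hcard)
    haveI : IsEmpty ((univ.filter fun j => c j ≠ 0) : Finset (Fin m)) :=
      Finset.isEmpty_coe_sort.mpr hs
    refine ⟨univ.filter fun j => c j ≠ 0, linearIndependent_empty_type, c, hc, fun j hj => ?_, rfl⟩
    simp only [Finset.mem_filter, Finset.mem_univ, true_and, not_not] at hj
    exact hj
  | succ k ih =>
    intro c hc hcard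
    set s : Finset (Fin m) := univ.filter fun j => c j ≠ 0 with hs_def
    by_cases hli : LinearIndependent ℝ (fun j : s => v j)
    · exact ⟨s, hli, c, hc, fun j hj => by simpa [hs_def] using hj, rfl⟩
    · -- get a nontrivial relation with a positive coefficient
      obtain ⟨g, hgsum, j₀, hj₀⟩ := Fintype.not_linearIndependent_iff.mp hli
      obtain ⟨g, hgsum, j₀, hj₀⟩ :
          ∃ g : s → ℝ, ∑ j : s, g j • v j = 0 ∧ ∃ j₀ : s, 0 < g j₀ := by
        rcases lt_trichotomy (g j₀) 0 with h | h | h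
        · refine ⟨-g, ?_, j₀, by simpa using h⟩
          have : ∑ j : s, (-g) j • v j = -∑ j : s, g j • v j := by
            simp [neg_smul, Finset.sum_neg_distrib]
          rw [this, hgsum, neg_zero]
        · exact absurd h hj₀
        · exact ⟨g, hgsum, j₀, h⟩
      -- extend g to Fin m
      set D : Fin m → ℝ := fun j => if h : j ∈ s then g ⟨j, h⟩ else 0 with hD_def
      have hDsum : ∑ j, D j • v j = 0 := by
        rw [← sum_extend_cone v s D (fun j hj => by simp [hD_def, hj])]
        calc ∑ j : s, D j • v j = ∑ j : s, g j • v j := by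
              apply Finset.sum_congr rfl; intro j _; simp [hD_def]
          _ = 0 := hgsum
      have hDj₀ : 0 < D (j₀ : Fin m) := by simp [hD_def, j₀.2, hj₀]
      set T : Finset (Fin m) := s.filter fun j => 0 < D j with hT_def
      have hTne : T.Nonempty := ⟨j₀, by simp [hT_def, j₀.2, hDj₀]⟩
      set t : ℝ := T.inf' hTne (fun j => c j / D j) with ht_def
      obtain ⟨j₁, hj₁T, hj₁⟩ := Finset.exists_mem_eq_inf' hTne (fun j => c j / D j)
      have hDj₁ : 0 < D j₁ := (Finset.mem_filter.mp hj₁T).2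
      have ht_nonneg : 0 ≤ t := by
        rw [ht_def]
        apply Finset.le_inf'
        intro j hj
        exact div_nonneg (hc j) (le_of_lt (Finset.mem_filter.mp hj).2)
      set c' : Fin m → ℝ := fun j => c j - t * D j with hc'_def
      have hc'_nonneg : ∀ j, 0 ≤ c' j := by
        intro j
        rcases le_or_gt (D j) 0 with h | h
        · have : t * D j ≤ 0 := mul_nonpos_of_nonneg_of_nonpos ht_nonneg h
          simp only [hc'_def]; linarith [hc j]
        · have hjT : j ∈ T := by
            have hjs : j ∈ s := by
              by_contra hjs
              simp [hD_def, hjs] at h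
            exact Finset.mem_filter.mpr ⟨hjs, h⟩
          have : t ≤ c j / D j := Finset.inf'_le _ hjT
          simp only [hc'_def]
          have := (le_div_iff₀ h).mp this
          linarith
      have hc'j₁ : c' j₁ = 0 := by
        simp only [hc'_def]
        rw [ht_def, hj₁, div_mul_cancel₀ _ (ne_of_gt hDj₁), sub_self]
      have hc'supp : (univ.filter fun j => c' j ≠ 0) ⊆ s.erase j₁ := by
        intro j hj
        simp only [Finset.mem_filter, Finset.mem_univ, true_and] at hj
        apply Finset.mem_erase.mpr
        constructor
        · rintro rfl; exact hj hc'j₁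
        · by_contra hjs
          have hcj : c j = 0 := by
            by_contra h; exact hjs (Finset.mem_filter.mpr ⟨Finset.mem_univ j, h⟩)
          have hDj : D j = 0 := by simp [hD_def, hjs]
          exact hj (by simp [hc'_def, hcj, hDj])
      have hcard' : (univ.filter fun j => c' j ≠ 0).card ≤ k := by
        have h1 : (s.erase j₁).card < s.card :=
          Finset.card_erase_lt_of_mem (Finset.mem_filter.mp hj₁T).1
        have h2 := Finset.card_le_card hc'supp
        omega
      obtain ⟨s', hli', d, hd1, hd2, hd3⟩ := ih c' hc'_nonneg hcard'
      refine ⟨s', hli', d, hd1, hd2, ?_⟩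
      rw [hd3]
      have : ∑ j, c' j • v j = ∑ j, c j • v j - t • ∑ j, D j • v j := by
        rw [Finset.smul_sum, ← Finset.sum_sub_distrib]
        apply Finset.sum_congr rfl
        intro j _
        simp [hc'_def, sub_smul, smul_smul]
      rw [this, hDsum, smul_zero, sub_zero]

/-- A finitely generated cone is closed. -/
lemma isClosed_fg_cone (v : Fin m → E) :
    IsClosed {x : E | ∃ c : Fin m → ℝ, (∀ j, 0 ≤ c j) ∧ x = ∑ j, c j • v j} := by
  have key : {x : E | ∃ c : Fin m → ℝ, (∀ j, 0 ≤ c j) ∧ x = ∑ j, c j • v j} =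
      ⋃ (s : Finset (Fin m)) (_ : LinearIndependent ℝ (fun j : s => v j)),
        (fun c : s → ℝ => ∑ j : s, c j • v j) '' {c | ∀ j, 0 ≤ c j} := by
    ext x
    simp only [Set.mem_setOf_eq, Set.mem_iUnion, Set.mem_image]
    constructor
    · rintro ⟨c, hc, rfl⟩
      obtain ⟨s, hli, d, hd1, hd2, hd3⟩ :=
        cone_caratheodory_aux v (univ.filter fun j => c j ≠ 0).card c hc le_rfl
      exact ⟨s, hli, fun j : s => d j, fun j => hd1 j,
        by rw [sum_extend_cone v s d hd2, hd3]⟩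
    · rintro ⟨s, hli, c, hc, rfl⟩
      set d : Fin m → ℝ := fun j => if h : j ∈ s then c ⟨j, h⟩ else 0 with hd_def
      refine ⟨d, fun j => ?_, ?_⟩
      · by_cases h : j ∈ s <;> simp [hd_def, h]; exact hc _
      · rw [← sum_extend_cone v s d (fun j hj => by simp [hd_def, hj])]
        apply Finset.sum_congr rfl
        intro j _
        simp [hd_def]
  rw [key]
  apply isClosed_iUnion_of_finite
  intro s
  apply isClosed_iUnion_of_finite
  intro hli
  set L : (s → ℝ) →ₗ[ℝ] E :=
    { toFun := fun c => ∑ j : s, c j • v j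
      map_add' := fun a b => by simp [add_smul, Finset.sum_add_distrib]
      map_smul' := fun r a => by simp [smul_smul, Finset.smul_sum] } with hL_def
  have hker : LinearMap.ker L = ⊥ := by
    rw [LinearMap.ker_eq_bot']
    intro c hc
    funext j
    exact Fintype.linearIndependent_iff.mp hli c hc j
  have hemb := LinearMap.isClosedEmbedding_of_injective hker
  have horth : IsClosed {c : s → ℝ | ∀ j, 0 ≤ c j} := by
    have : {c : s → ℝ | ∀ j, 0 ≤ c j} = ⋂ j, {c | 0 ≤ c j} := by
      ext c; simp [Set.mem_iInter]
    rw [this]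
    exact isClosed_iInter fun j => isClosed_le continuous_const (continuous_apply j)
  exact hemb.isClosedMap _ horth

end ConeClosed

/-- Farkas-type characterization: `A x ≤ 0, (A x)_i < 0` has no solution iff
there is `y ≥ 0` with `Aᵀ y = 0` and `y_i = 1`. -/
theorem stmt11 {m n : ℕ} (A : Matrix (Fin m) (Fin n) ℝ) (i : Fin m) :
    (¬ ∃ x : Fin n → ℝ, (∀ j, A.mulVec x j ≤ 0) ∧ A.mulVec x i < 0) ↔
      (∃ y : Fin m → ℝ, (∀ j, 0 ≤ y j) ∧ A.transpose.mulVec y = 0 ∧ y i = 1) := by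
  set v : Fin m → EuclideanSpace ℝ (Fin n) := fun j => WithLp.toLp 2 (fun k => A j k) with hv_def
  have hsum_apply : ∀ (c : Fin m → ℝ) (k : Fin n),
      (∑ j, c j • v j) k = ∑ j, c j * A j k := by
    intro c k
    rw [WithLp.ofLp_sum, Finset.sum_apply]
    rfl
  constructor
  · intro h
    -- show -v i is in the cone
    have hmem : ∃ c : Fin m → ℝ, (∀ j, 0 ≤ c j) ∧ -v i = ∑ j, c j • v j := by
      by_contra hmem
      -- construct the convex cone
      set K : ConvexCone ℝ (EuclideanSpace ℝ (Fin n)) :=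
        { carrier := {x | ∃ c : Fin m → ℝ, (∀ j, 0 ≤ c j) ∧ x = ∑ j, c j • v j}
          smul_mem' := by
            rintro t ht x ⟨c, hc, rfl⟩
            refine ⟨fun j => t * c j, fun j => mul_nonneg ht.le (hc j), ?_⟩
            rw [Finset.smul_sum]
            exact Finset.sum_congr rfl fun j _ => (mul_smul t (c j) (v j)).symm
          add_mem' := by
            rintro x ⟨c, hc, rfl⟩ y ⟨d, hd, rfl⟩
            refine ⟨fun j => c j + d j, fun j => add_nonneg (hc j) (hd j), ?_⟩
            rw [← Finset.sum_add_distrib]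
            exact Finset.sum_congr rfl fun j _ => (add_smul (c j) (d j) (v j)).symm } with hK_def
      have hKne : (K : Set (EuclideanSpace ℝ (Fin n))).Nonempty :=
        ⟨0, ⟨0, fun j => le_rfl, by simp⟩⟩
      have hKcl : IsClosed (K : Set (EuclideanSpace ℝ (Fin n))) := isClosed_fg_cone v
      obtain ⟨w, hw1, hw2⟩ :=
        ProperCone.hyperplane_separation' (x₀ := -v i)
          ⟨{ carrier := (K : Set (EuclideanSpace ℝ (Fin n)))
             zero_mem' := ⟨0, fun j => le_rfl, by simp⟩
             add_mem' := fun ha hb => K.add_mem ha hb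
             smul_mem' := by
              rintro t x ⟨c, hc, rfl⟩
              refine ⟨fun j => (t : ℝ) * c j, fun j => mul_nonneg t.2 (hc j), ?_⟩
              simp [NNReal.smul_def, Finset.smul_sum, smul_smul]
              exact Finset.sum_congr rfl fun j _ => by rw [mul_smul]; rfl }, hKcl⟩ hmem
      rw [real_inner_comm] at hw2
      -- construct the contradiction x := -w
      apply h
      refine ⟨fun k => -(w k), ?_, ?_⟩
      · intro j
        have hvj : (v j : EuclideanSpace ℝ (Fin n)) ∈ K := by
          refine ⟨fun j' => if j' = j then 1 else 0, fun j' => by positivity, ?_⟩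
          simp [ite_smul]
        have := hw1 _ hvj
        rw [PiLp.inner_apply] at this
        have hmv : A.mulVec (fun k => -(w k)) j = -∑ k, A j k * w k := by
          simp [Matrix.mulVec, dotProduct, mul_comm, Finset.sum_neg_distrib]
        rw [hmv]
        simp only [RCLike.inner_apply, conj_trivial] at this
        have h2 : (0:ℝ) ≤ ∑ k, A j k * w k := by simpa [hv_def, mul_comm] using this
        linarith
      · have : inner ℝ w (-v i) = -∑ k, A i k * w k := by
          rw [inner_neg_right, PiLp.inner_apply]
          simp [hv_def, mul_comm]
        rw [this] at hw2
        have hmv : A.mulVec (fun k => -(w k)) i = -∑ k, A i k * w k := by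
          simp [Matrix.mulVec, dotProduct, mul_comm, Finset.sum_neg_distrib]
        rw [hmv]
        linarith
    obtain ⟨c, hc, hsum⟩ := hmem
    refine ⟨fun j => (c j + if j = i then 1 else 0) / (c i + 1), ?_, ?_, ?_⟩
    · intro j
      apply div_nonneg
      · have := hc j; split <;> linarith
      · linarith [hc i]
    · funext k
      have hci : c i + 1 ≠ 0 := by linarith [hc i]
      have hneg : (-v i) k = -A i k := rfl
      have hsk : ∑ j, c j * A j k = -A i k := by
        have := congrArg (fun z : EuclideanSpace ℝ (Fin n) => z k) hsum
        simp only at this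
        rw [hsum_apply] at this
        rw [← this]; rfl
      have : A.transpose.mulVec (fun j => (c j + if j = i then 1 else 0) / (c i + 1)) k
          = (∑ j, (c j + if j = i then 1 else 0) * A j k) / (c i + 1) := by
        simp only [Matrix.mulVec, dotProduct, Matrix.transpose_apply, Finset.sum_div]
        exact Finset.sum_congr rfl fun j _ => by ring
      rw [this]
      have h2 : ∑ j, (c j + if j = i then 1 else 0) * A j k
          = (∑ j, c j * A j k) + A i k := by
        calc ∑ j, (c j + if j = i then 1 else 0) * A j k
            = ∑ j, (c j * A j k + if j = i then A j k else 0) :=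
              Finset.sum_congr rfl fun j _ => by split <;> ring
          _ = (∑ j, c j * A j k) + A i k := by
              rw [Finset.sum_add_distrib, Finset.sum_ite_eq' univ i (fun j => A j k)]
              simp
      rw [h2, hsk]
      simp
    · show (c i + if i = i then 1 else 0) / (c i + 1) = 1
      have hci : c i + 1 ≠ 0 := by linarith [hc i]
      rw [if_pos rfl, div_self hci]
  · rintro ⟨y, hy, hAty, hyi⟩ ⟨x, hx, hxi⟩
    have h0 : (0:ℝ) = ∑ j, y j * A.mulVec x j := by
      have : ∑ j, y j * A.mulVec x j = dotProduct y (A.mulVec x) := rfl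
      rw [this, Matrix.dotProduct_mulVec, ← Matrix.mulVec_transpose, hAty]
      simp [dotProduct]
    have hsplit : ∑ j, y j * A.mulVec x j
        = y i * A.mulVec x i + ∑ j ∈ univ.erase i, y j * A.mulVec x j := by
      exact (Finset.add_sum_erase univ (fun j => y j * A.mulVec x j) (Finset.mem_univ i)).symm
    have hrest : ∑ j ∈ univ.erase i, y j * A.mulVec x j ≤ 0 :=
      Finset.sum_nonpos fun j _ => mul_nonpos_of_nonneg_of_nonpos (hy j) (hx j)
    rw [hsplit, hyi, one_mul] at h0
    linarith
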